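/- Let D be a nonempty connected open subset of ℂ, and let f and g be analytic functions on D with f'(z) ≠ 0 and g'(z) ≠ 0 for all z ∈ D. If S(f)(z) = S(g)(z) for all z ∈ D, then there exists a matrix [[a,b],[c,d]] ∈ GL(2,ℂ) such that for all z ∈ D, c g(z) + d ≠ 0 and f(z) = (a g(z) + b)/(c g(z) + d). -/

import Mathlib

open Filter Topology Metric

/-- The Schwarz derivative `S(f) = f'''/f' - (3/2)(f''/f')²`. -/
noncomputable def schwarzian (f : ℂ → ℂ) (z : ℂ) : ℂ :=
  iteratedDeriv 3 f z / deriv f z - (3 / 2) * (iteratedDeriv 2 f z / deriv f z) ^ 2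

lemma AnalyticAt.deriv' {u : ℂ → ℂ} {z : ℂ} (h : AnalyticAt ℂ u z) :
    AnalyticAt ℂ (deriv u) z :=
  ((ContinuousLinearMap.apply ℂ ℂ (1 : ℂ)).analyticAt _).comp h.fderiv

/-- An analytic solution of a first-order linear ODE vanishing at a point vanishes near it. -/
lemma vanish_of_linODE {k p : ℂ → ℂ} {z₀ : ℂ} (hk : AnalyticAt ℂ k z₀)
    (hp : ContinuousAt p z₀) (hode : ∀ᶠ z in 𝓝 z₀, deriv k z = p z * k z)
    (h0 : k z₀ = 0) : ∀ᶠ z in 𝓝 z₀, k z = 0 := by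
  by_contra h
  have hord : analyticOrderAt k z₀ ≠ ⊤ := fun heq => h (analyticOrderAt_eq_top.mp heq)
  obtain ⟨n, hn⟩ := ENat.ne_top_iff_exists.mp hord
  obtain ⟨u, hu, hu0, hku⟩ := hk.analyticOrderAt_eq_natCast.mp hn.symm
  -- n ≥ 1
  have hn1 : 1 ≤ n := by
    rcases Nat.eq_zero_or_pos n with h0' | h
    · exfalso; apply hu0
      have := hku.self_of_nhds
      simp [h0', h0] at this
      exact this.symm
    · exact h
  have hud : ∀ᶠ z in 𝓝 z₀, AnalyticAt ℂ u z := hu.eventually_analyticAt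
  -- deriv k = n (z-z₀)^(n-1) u + (z-z₀)^n u'
  have hder : ∀ᶠ z in 𝓝 z₀,
      deriv k z = (n : ℂ) * (z - z₀) ^ (n - 1) * u z + (z - z₀) ^ n * deriv u z := by
    have hev : k =ᶠ[𝓝 z₀] fun z => (z - z₀) ^ n * u z := by
      filter_upwards [hku] with z hz using by simpa using hz
    filter_upwards [hev.eventuallyEq_nhds, hud] with z hz hzu
    rw [hz.deriv_eq]
    rw [deriv_fun_mul (by fun_prop) hzu.differentiableAt]
    have : deriv (fun z => (z - z₀) ^ n) z = (n : ℂ) * (z - z₀) ^ (n - 1) := by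
      simp [deriv_fun_pow (f := fun z => z - z₀) (x := z) (by fun_prop)]
    rw [this]
  -- on punctured nbhd: n * u z = (z - z₀) * (p z * u z - deriv u z)
  have key : ∀ᶠ z in 𝓝[≠] z₀,
      (n : ℂ) * u z = (z - z₀) * (p z * u z - deriv u z) := by
    filter_upwards [eventually_nhdsWithin_of_eventually_nhds hder,
      eventually_nhdsWithin_of_eventually_nhds hode,
      eventually_nhdsWithin_of_eventually_nhds hku, self_mem_nhdsWithin] with z h1 h2 h3 h4
    have hzne : z - z₀ ≠ 0 := sub_ne_zero.mpr h4
    have h2' : deriv k z = p z * ((z - z₀) ^ n * u z) := by rw [h2]; simp [h3]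
    rw [h1] at h2'
    have hpow : (z - z₀) ^ n = (z - z₀) ^ (n - 1) * (z - z₀) := by
      rw [← pow_succ, Nat.sub_add_cancel hn1]
    rw [hpow] at h2'
    have hcan : (z - z₀)^(n-1) * ((n:ℂ) * u z + (z - z₀) * deriv u z)
        = (z - z₀)^(n-1) * ((z - z₀) * (p z * u z)) := by linear_combination h2'
    have := mul_left_cancel₀ (pow_ne_zero (n-1) hzne) hcan
    linear_combination this
  -- take limits along 𝓝[≠] z₀
  have hcontL : ContinuousAt (fun z => (n : ℂ) * u z) z₀ := by
    exact (continuous_const.continuousAt).mul hu.continuousAt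
  have hcontR : ContinuousAt (fun z => (z - z₀) * (p z * u z - deriv u z)) z₀ := by
    exact ((continuous_id.sub continuous_const).continuousAt).mul
      ((hp.mul hu.continuousAt).sub hu.deriv'.continuousAt)
  have hlim : (n : ℂ) * u z₀ = (z₀ - z₀) * (p z₀ * u z₀ - deriv u z₀) := by
    have h1 : Tendsto (fun z => (n : ℂ) * u z) (𝓝[≠] z₀) (𝓝 ((n : ℂ) * u z₀)) :=
      hcontL.continuousWithinAt.tendsto
    have h2 : Tendsto (fun z => (z - z₀) * (p z * u z - deriv u z)) (𝓝[≠] z₀)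
        (𝓝 ((z₀ - z₀) * (p z₀ * u z₀ - deriv u z₀))) := hcontR.continuousWithinAt.tendsto
    exact tendsto_nhds_unique (h1.congr' key) h2
  simp at hlim
  rcases hlim with h|h
  · omega
  · exact hu0 h

lemma moebius_alg1 (f1 f2 f3 g1 g2 g3 q : ℂ) (hf1 : f1 ≠ 0) (hg1 : g1 ≠ 0) (hq : q ≠ 0)
    (hs : f3/f1 - 3/2*(f2/f1)^2 = g3/g1 - 3/2*(g2/g1)^2) (cc : ℂ) :
    (f3*f1 - f2*f2)/f1^2 - (g3*g1 - g2*g2)/g1^2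
      + (2*cc*g2*q - 2*cc*g1*(cc*g1))/q^2
    = (f2/f1 + g2/g1 - 2*cc*g1/q) * (f2/f1 - g2/g1 + 2*cc*g1/q) / 2 := by
  have hs' : 4*f3*f1^2*g1^3 - 6*f1*f2^2*g1^3 = 4*g3*g1^2*f1^3 - 6*g1*g2^2*f1^3 := by
    field_simp [hf1, hg1] at hs
    linear_combination 2*f1*g1*hs
  rw [eq_div_iff (two_ne_zero (α := ℂ))]
  field_simp [hf1, hg1, hq]
  field_simp [hf1, hg1] at hs
  linear_combination q^2 * hs

lemma moebius_alg2 (F1 F2 G1 G2 : ℂ) (h1 : F1 ≠ 0) (h2 : G1 ≠ 0) :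
    F2/F1 - G2/G1 + 2*((F1*G2/G1 - F2)/(2*F1*G1))*G1 = 0 := by
  field_simp
  ring

lemma moebius_alg3 (F1 F2 G1 G2 q cc : ℂ) (h1 : F1 ≠ 0) (h2 : G1 ≠ 0) (hq : q ≠ 0) :
    ((F2*q^2 + F1*(2*q*(cc*G1)))*G1 - F1*q^2*G2)/G1^2
    = (F1*q^2/G1) * (F2/F1 - G2/G1 + 2*cc*G1/q) := by
  field_simp
  ring

set_option maxHeartbeats 2000000 in
theorem eq_moebius_of_schwarzian_eq'
    (D : Set ℂ) (hD : D.Nonempty) (hDo : IsOpen D) (hDc : IsConnected D)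
    (f g : ℂ → ℂ)
    (hf : AnalyticOnNhd ℂ f D) (hg : AnalyticOnNhd ℂ g D)
    (hf' : ∀ z ∈ D, deriv f z ≠ 0) (hg' : ∀ z ∈ D, deriv g z ≠ 0)
    (hS : ∀ z ∈ D, deriv (deriv (deriv f)) z / deriv f z
        - (3 / 2) * (deriv (deriv f) z / deriv f z) ^ 2
        = deriv (deriv (deriv g)) z / deriv g z
        - (3 / 2) * (deriv (deriv g) z / deriv g z) ^ 2) :
    ∃ a b c d : ℂ, a * d - b * c ≠ 0 ∧
      ∀ z ∈ D, c * g z + d ≠ 0 ∧ f z = (a * g z + b) / (c * g z + d) := by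
  obtain ⟨z₀, hz₀⟩ := hD
  -- analyticity of derivatives
  have hf1 : AnalyticOnNhd ℂ (deriv f) D := hf.deriv
  have hf2 : AnalyticOnNhd ℂ (deriv (deriv f)) D := hf1.deriv
  have hf3 : AnalyticOnNhd ℂ (deriv (deriv (deriv f))) D := hf2.deriv
  have hg1 : AnalyticOnNhd ℂ (deriv g) D := hg.deriv
  have hg2 : AnalyticOnNhd ℂ (deriv (deriv g)) D := hg1.deriv
  have hg3 : AnalyticOnNhd ℂ (deriv (deriv (deriv g))) D := hg2.deriv
  -- the constants
  set w₀ : ℂ := g z₀ with hw₀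
  set α : ℂ := deriv f z₀ / deriv g z₀ with hα
  set β : ℂ := (deriv f z₀ * deriv (deriv g) z₀ / deriv g z₀ - deriv (deriv f) z₀)
      / (2 * deriv f z₀ * deriv g z₀) with hβ
  set a : ℂ := f z₀ * β + α with ha
  set b : ℂ := f z₀ - a * w₀ with hb
  set c : ℂ := β with hc
  set d : ℂ := 1 - β * w₀ with hd
  have hf10 : deriv f z₀ ≠ 0 := hf' z₀ hz₀
  have hg10 : deriv g z₀ ≠ 0 := hg' z₀ hz₀
  have hα0 : α ≠ 0 := div_ne_zero hf10 hg10
  have hdet : a * d - b * c = α := by rw [ha, hb, hc, hd]; ring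
  have hden₀ : c * g z₀ + d = 1 := by rw [hc, hd, ← hw₀]; ring
  -- the open set U
  set U : Set ℂ := {z | z ∈ D ∧ c * g z + d ≠ 0} with hU
  have hUD : U ⊆ D := fun z hz => hz.1
  have hUo : IsOpen U := by
    rw [isOpen_iff_mem_nhds]
    rintro z ⟨hzD, hzne⟩
    have hcont : ContinuousAt (fun w => c * g w + d) z :=
      (continuousAt_const.mul (hg z hzD).continuousAt).add continuousAt_const
    filter_upwards [hDo.mem_nhds hzD, hcont.eventually_ne hzne] with w h1 h2
    exact ⟨h1, h2⟩
  have hz₀U : z₀ ∈ U := ⟨hz₀, by rw [hden₀]; exact one_ne_zero⟩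
  -- the functions k, p, W
  set k : ℂ → ℂ := fun z => deriv (deriv f) z / deriv f z - deriv (deriv g) z / deriv g z
      + 2 * c * deriv g z / (c * g z + d) with hk
  set p : ℂ → ℂ := fun z => (deriv (deriv f) z / deriv f z + deriv (deriv g) z / deriv g z
      - 2 * c * deriv g z / (c * g z + d)) / 2 with hp
  -- derivative of the denominator helper
  have hdenD : ∀ z ∈ D, deriv (fun w => c * g w + d) z = c * deriv g z := by
    intro z hz
    rw [deriv_add_const, deriv_const_mul _ (hg z hz).differentiableAt]
  -- the ODE on U
  have hode : ∀ z ∈ U, deriv k z = p z * k z := by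
    rintro z ⟨hzD, hzne⟩
    have h1 : deriv (fun w => deriv (deriv f) w / deriv f w) z
        = (deriv (deriv (deriv f)) z * deriv f z - deriv (deriv f) z * deriv (deriv f) z)
          / (deriv f z) ^ 2 := by
      rw [deriv_fun_div (hf2 z hzD).differentiableAt (hf1 z hzD).differentiableAt (hf' z hzD)]
    have h2 : deriv (fun w => deriv (deriv g) w / deriv g w) z
        = (deriv (deriv (deriv g)) z * deriv g z - deriv (deriv g) z * deriv (deriv g) z)
          / (deriv g z) ^ 2 := by
      rw [deriv_fun_div (hg2 z hzD).differentiableAt (hg1 z hzD).differentiableAt (hg' z hzD)]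
    have hdnum : DifferentiableAt ℂ (fun w => 2 * c * deriv g w) z :=
      (differentiableAt_const _).mul (hg1 z hzD).differentiableAt
    have hdden : DifferentiableAt ℂ (fun w => c * g w + d) z :=
      ((differentiableAt_const _).mul (hg z hzD).differentiableAt).add_const _
    have h3 : deriv (fun w => 2 * c * deriv g w / (c * g w + d)) z
        = (2 * c * deriv (deriv g) z * (c * g z + d)
            - 2 * c * deriv g z * (c * deriv g z)) / (c * g z + d) ^ 2 := by
      rw [deriv_fun_div hdnum hdden hzne]
      rw [deriv_const_mul _ (hg1 z hzD).differentiableAt, hdenD z hzD]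
    have hkd : deriv k z = deriv (fun w => deriv (deriv f) w / deriv f w) z
        - deriv (fun w => deriv (deriv g) w / deriv g w) z
        + deriv (fun w => 2 * c * deriv g w / (c * g w + d)) z := by
      rw [hk]
      rw [deriv_fun_add, deriv_fun_sub]
      · exact ((hf2 z hzD).div (hf1 z hzD) (hf' z hzD)).differentiableAt
      · exact ((hg2 z hzD).div (hg1 z hzD) (hg' z hzD)).differentiableAt
      · exact (((hf2 z hzD).div (hf1 z hzD) (hf' z hzD)).sub
          ((hg2 z hzD).div (hg1 z hzD) (hg' z hzD))).differentiableAt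
      · refine DifferentiableAt.div ?_ ?_ hzne
        · exact (differentiableAt_const _).mul (hg1 z hzD).differentiableAt
        · exact ((differentiableAt_const _).mul (hg z hzD).differentiableAt).add_const _
    rw [hkd, h1, h2, h3]
    simp only [hp, hk]
    have halg := moebius_alg1 (deriv f z) (deriv (deriv f) z) (deriv (deriv (deriv f)) z)
      (deriv g z) (deriv (deriv g) z) (deriv (deriv (deriv g)) z) (c * g z + d)
      (hf' z hzD) (hg' z hzD) hzne (hS z hzD) c
    linear_combination halg
  -- value of k at z₀
  have hk0 : k z₀ = 0 := by
    have halg := moebius_alg2 (deriv f z₀) (deriv (deriv f) z₀) (deriv g z₀)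
      (deriv (deriv g) z₀) hf10 hg10
    rw [hk]
    simp only [hden₀, div_one]
    rw [hβ]
    linear_combination halg
  -- k vanishes near z₀
  have hkU : ∀ᶠ z in 𝓝 z₀, k z = 0 := by
    refine vanish_of_linODE (p := p) ?_ ?_ ?_ hk0
    · exact (((hf2 z₀ hz₀).div (hf1 z₀ hz₀) hf10).sub
        ((hg2 z₀ hz₀).div (hg1 z₀ hz₀) hg10)).add
        (((analyticAt_const.mul (hg1 z₀ hz₀))).div
          ((analyticAt_const.mul (hg z₀ hz₀)).add analyticAt_const) (by rw [hden₀]; simp))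
    · refine ContinuousAt.div ?_ continuousAt_const two_ne_zero
      refine ContinuousAt.sub (ContinuousAt.add ?_ ?_) ?_
      · exact ((hf2 z₀ hz₀).continuousAt).div ((hf1 z₀ hz₀).continuousAt) hf10
      · exact ((hg2 z₀ hz₀).continuousAt).div ((hg1 z₀ hz₀).continuousAt) hg10
      · exact (continuousAt_const.mul (hg1 z₀ hz₀).continuousAt).div
          ((continuousAt_const.mul (hg z₀ hz₀).continuousAt).add continuousAt_const)
          (by rw [hden₀]; exact one_ne_zero)
    · filter_upwards [hUo.mem_nhds hz₀U] with z hz using hode z hz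
  -- pick a ball
  obtain ⟨r, hr0, hrball⟩ : ∃ r > 0, ball z₀ r ⊆ U ∩ {z | k z = 0} := by
    have : U ∩ {z | k z = 0} ∈ 𝓝 z₀ := by
      filter_upwards [hUo.mem_nhds hz₀U, hkU] with z h1 h2 using ⟨h1, h2⟩
    exact Metric.mem_nhds_iff.mp this |>.imp (fun r h => ⟨h.1, h.2⟩)
  -- W is constant on the ball
  set W : ℂ → ℂ := fun z => deriv f z * (c * g z + d) ^ 2 / deriv g z with hW
  have hWd : ∀ z ∈ U, deriv W z = W z * k z := by
    rintro z ⟨hzD, hzne⟩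
    have hnum : DifferentiableAt ℂ (fun w => deriv f w * (c * g w + d) ^ 2) z := by
      exact (hf1 z hzD).differentiableAt.mul
        ((((differentiableAt_const _).mul (hg z hzD).differentiableAt).add_const _).pow 2)
    rw [hW]
    rw [deriv_fun_div hnum (hg1 z hzD).differentiableAt (hg' z hzD)]
    rw [deriv_fun_mul (d := fun w => (c * g w + d) ^ 2) (hf1 z hzD).differentiableAt
      ((((differentiableAt_const _).mul (hg z hzD).differentiableAt).add_const _).pow 2)]
    have : deriv (fun w => (c * g w + d) ^ 2) z = 2 * (c * g z + d) * (c * deriv g z) := by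
      rw [show (fun w => (c * g w + d) ^ 2) = (fun y => y ^ 2) ∘ (fun w => c * g w + d) from rfl]
      rw [deriv_comp _ (by fun_prop) (by
        exact ((differentiableAt_const _).mul (hg z hzD).differentiableAt).add_const _)]
      rw [hdenD z hzD, deriv_pow_field]
      push_cast
      ring
    rw [this, hk]
    have halg := moebius_alg3 (deriv f z) (deriv (deriv f) z) (deriv g z)
      (deriv (deriv g) z) (c * g z + d) c (hf' z hzD) (hg' z hzD) hzne
    linear_combination halg
  have hWconst : ∀ z ∈ ball z₀ r, W z = W z₀ := by
    intro z hz
    have hWdiff : DifferentiableOn ℂ W (ball z₀ r) := by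
      intro x hx
      have hxD := (hrball hx).1.1
      exact (((hf1 x hxD).differentiableAt.mul
        ((((differentiableAt_const _).mul (hg x hxD).differentiableAt).add_const _).pow 2)).div
        (hg1 x hxD).differentiableAt (hg' x hxD)).differentiableWithinAt
    have key : ∀ x ∈ ball z₀ r, fderivWithin ℂ W (ball z₀ r) x = 0 := by
      intro x hx
      rw [fderivWithin_of_isOpen isOpen_ball hx]
      have hx' := hrball hx
      have : deriv W x = 0 := by rw [hWd x hx'.1, hx'.2]; ring
      rw [← toSpanSingleton_deriv, this]
      ext y; simp
    exact ((convex_ball z₀ r).is_const_of_fderivWithin_eq_zero hWdiff key hz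
      (mem_ball_self hr0))
  have hW₀ : W z₀ = α := by
    simp only [hW]
    rw [hden₀, hα]
    simp
  -- f' = α g' / (c g + d)^2 on the ball
  have hf1eq : ∀ z ∈ ball z₀ r, deriv f z = α * deriv g z / (c * g z + d) ^ 2 := by
    intro z hz
    have h := (hWconst z hz).trans hW₀
    rw [hW] at h
    have hzU := hrball hz
    rw [div_eq_iff (hg' z hzU.1.1)] at h
    rw [eq_div_iff (pow_ne_zero 2 hzU.1.2)]
    linear_combination h
  -- Φ = f - (a g + b)/(c g + d) has zero derivative on the ball, and vanishes at z₀
  set Φ : ℂ → ℂ := fun z => f z - (a * g z + b) / (c * g z + d) with hΦ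
  have hΦd : ∀ z ∈ ball z₀ r, deriv Φ z = 0 := by
    intro z hz
    have hzU := hrball hz
    have hzD := hzU.1.1
    have hzne := hzU.1.2
    have hdden : DifferentiableAt ℂ (fun w => c * g w + d) z :=
      ((differentiableAt_const _).mul (hg z hzD).differentiableAt).add_const _
    have hdnum : DifferentiableAt ℂ (fun w => a * g w + b) z :=
      ((differentiableAt_const _).mul (hg z hzD).differentiableAt).add_const _
    rw [hΦ]
    rw [deriv_fun_sub (g := fun w => (a * g w + b) / (c * g w + d)) (hf z hzD).differentiableAt (hdnum.div hdden hzne)]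
    rw [deriv_fun_div hdnum hdden hzne]
    have hnum : deriv (fun w => a * g w + b) z = a * deriv g z := by
      rw [deriv_add_const, deriv_const_mul _ (hg z hzD).differentiableAt]
    rw [hnum, hdenD z hzD, hf1eq z hz]
    have : a * deriv g z * (c * g z + d) - (a * g z + b) * (c * deriv g z)
        = α * deriv g z := by
      have : a * deriv g z * (c * g z + d) - (a * g z + b) * (c * deriv g z)
          = (a * d - b * c) * deriv g z := by ring
      rw [this, hdet]
    rw [this]
    ring
  have hΦ0 : ∀ z ∈ ball z₀ r, Φ z = 0 := by
    intro z hz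
    have hΦdiff : DifferentiableOn ℂ Φ (ball z₀ r) := by
      intro x hx
      have hxU := hrball hx
      refine ((hf x hxU.1.1).differentiableAt.sub ?_).differentiableWithinAt
      refine DifferentiableAt.div ?_ ?_ hxU.1.2
      · exact ((differentiableAt_const _).mul (hg x hxU.1.1).differentiableAt).add_const _
      · exact ((differentiableAt_const _).mul (hg x hxU.1.1).differentiableAt).add_const _
    have key : ∀ x ∈ ball z₀ r, fderivWithin ℂ Φ (ball z₀ r) x = 0 := by
      intro x hx
      rw [fderivWithin_of_isOpen isOpen_ball hx, ← toSpanSingleton_deriv, hΦd x hx]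
      ext y; simp
    have := (convex_ball z₀ r).is_const_of_fderivWithin_eq_zero hΦdiff key hz
      (mem_ball_self hr0)
    rw [this]
    simp only [hΦ, hden₀, hb, hw₀, div_one]
    ring
  -- globalize via the identity theorem
  set F : ℂ → ℂ := fun z => f z * (c * g z + d) - (a * g z + b) with hF
  have hFan : AnalyticOnNhd ℂ F D := by
    intro z hz
    exact ((hf z hz).mul ((analyticAt_const.mul (hg z hz)).add analyticAt_const)).sub
      ((analyticAt_const.mul (hg z hz)).add analyticAt_const)
  have hF0 : Set.EqOn F 0 D := by
    refine hFan.eqOn_zero_of_preconnected_of_eventuallyEq_zero hDc.isPreconnected hz₀ ?_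
    filter_upwards [isOpen_ball.mem_nhds (mem_ball_self hr0)] with z hz
    have h1 := hΦ0 z hz
    have hzne := (hrball hz).1.2
    simp only [hΦ, sub_eq_zero] at h1
    simp only [hF, Pi.zero_apply]
    rw [h1]
    rw [div_mul_cancel₀ _ hzne, sub_self]
  -- conclusion
  refine ⟨a, b, c, d, by rw [hdet]; exact hα0, fun z hz => ?_⟩
  have hFz : f z * (c * g z + d) - (a * g z + b) = 0 := hF0 hz
  have hzne : c * g z + d ≠ 0 := by
    intro hzero
    rw [hzero] at hFz
    have h2 : a * g z + b = 0 := by linear_combination -hFz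
    apply hα0
    rw [← hdet]
    have : a * d - b * c = a * (c * g z + d) - c * (a * g z + b) := by ring
    rw [this, hzero, h2]
    ring
  refine ⟨hzne, ?_⟩
  rw [eq_div_iff hzne]
  linear_combination hFz

/-- Two functions with the same Schwarz derivative on a domain differ by a Möbius
transformation in `GL(2,ℂ)`. -/
theorem eq_moebius_of_schwarzian_eq
    (D : Set ℂ) (hD : D.Nonempty) (hDo : IsOpen D) (hDc : IsConnected D)
    (f g : ℂ → ℂ)
    (hf : AnalyticOnNhd ℂ f D) (hg : AnalyticOnNhd ℂ g D)
    (hf' : ∀ z ∈ D, deriv f z ≠ 0) (hg' : ∀ z ∈ D, deriv g z ≠ 0)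
    (hS : ∀ z ∈ D, schwarzian f z = schwarzian g z) :
    ∃ a b c d : ℂ, a * d - b * c ≠ 0 ∧
      ∀ z ∈ D, c * g z + d ≠ 0 ∧ f z = (a * g z + b) / (c * g z + d) := by
  refine eq_moebius_of_schwarzian_eq' D hD hDo hDc f g hf hg hf' hg' ?_
  intro z hz
  have := hS z hz
  simpa [schwarzian, iteratedDeriv_succ, iteratedDeriv_one] using this
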